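/- Let C_i, C_L ⊆ F_2^n be linear binary codes with 1 ≤ i ≤ L−1. Then the L-level Construction C constellation Γ_C = 2^{i−1}ψ(C_i) + 2^{L−1}ψ(C_L) + 2^L Z^n (all other component codes trivial) is geometrically uniform. -/

import Mathlib

/-- The natural embedding of `F_2^n` into `ℝ^n` (Euclidean space). -/
noncomputable def psiR {n : ℕ} (c : Fin n → ZMod 2) : EuclideanSpace ℝ (Fin n) :=
  WithLp.toLp 2 (fun i => ((c i).val : ℝ))

/-- The natural embedding of `ℤ^n` into `ℝ^n` (Euclidean space). -/
noncomputable def embZ {n : ℕ} (z : Fin n → ℤ) : EuclideanSpace ℝ (Fin n) :=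
  WithLp.toLp 2 (fun i => (z i : ℝ))

/-- The constellation `2^{i-1}ψ(C_i) + 2^{L-1}ψ(C_L) + 2^L ℤ^n`. -/
noncomputable def gammaTwoLevels {n : ℕ} (L i : ℕ)
    (Ci CL : Submodule (ZMod 2) (Fin n → ZMod 2)) : Set (EuclideanSpace ℝ (Fin n)) :=
  {v | ∃ ci ∈ Ci, ∃ cL ∈ CL, ∃ z : Fin n → ℤ,
        v = (2 : ℝ) ^ (i - 1) • psiR ci + (2 : ℝ) ^ (L - 1) • psiR cL + (2 : ℝ) ^ L • embZ z}

lemma zmod2cases (c : ZMod 2) : c = 0 ∨ c = 1 := by revert c; decide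

lemma val11 : ((1 + 1 : ZMod 2)).val = 0 := rfl

lemma lvlI (ca ca' : ZMod 2) :
    ((ca.val : ℝ)) + (if ca = 1 then (-1:ℝ) else 1) * (ca'.val : ℝ) = ((ca + ca').val : ℝ) := by
  rcases zmod2cases ca with h | h <;> rcases zmod2cases ca' with h' | h' <;>
    subst h <;> subst h' <;>
    simp only [val11, ZMod.val_zero, ZMod.val_one, add_zero, zero_add] <;> norm_num

lemma lvlL (ca cb cb' : ZMod 2) :
    ∃ k : ℤ, ((cb.val : ℝ)) + (if ca = 1 then (-1:ℝ) else 1) * (cb'.val : ℝ)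
      = ((cb + cb').val : ℝ) + 2 * k := by
  rcases zmod2cases ca with h | h <;> rcases zmod2cases cb with h2 | h2 <;>
    rcases zmod2cases cb' with h3 | h3 <;> subst h <;> subst h2 <;> subst h3 <;>
    [refine ⟨0, ?_⟩; refine ⟨0, ?_⟩; refine ⟨0, ?_⟩; refine ⟨1, ?_⟩;
     refine ⟨0, ?_⟩; refine ⟨-1, ?_⟩; refine ⟨0, ?_⟩; refine ⟨0, ?_⟩] <;>
    simp only [val11, ZMod.val_zero, ZMod.val_one, add_zero, zero_add] <;> norm_num

lemma lvlI' (ca ca' : ZMod 2) :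
    (if ca = 1 then (-1:ℝ) else 1) * ((ca'.val : ℝ) - (ca.val : ℝ)) = ((ca + ca').val : ℝ) := by
  rcases zmod2cases ca with h | h <;> rcases zmod2cases ca' with h' | h' <;>
    subst h <;> subst h' <;>
    simp only [val11, ZMod.val_zero, ZMod.val_one, add_zero, zero_add] <;> norm_num

lemma lvlL' (ca cb cb' : ZMod 2) :
    ∃ k : ℤ, (if ca = 1 then (-1:ℝ) else 1) * ((cb'.val : ℝ) - (cb.val : ℝ))
      = ((cb + cb').val : ℝ) + 2 * k := by
  rcases zmod2cases ca with h | h <;> rcases zmod2cases cb with h2 | h2 <;>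
    rcases zmod2cases cb' with h3 | h3 <;> subst h <;> subst h2 <;> subst h3 <;>
    [refine ⟨0, ?_⟩; refine ⟨0, ?_⟩; refine ⟨-1, ?_⟩; refine ⟨0, ?_⟩;
     refine ⟨0, ?_⟩; refine ⟨-1, ?_⟩; refine ⟨0, ?_⟩; refine ⟨0, ?_⟩] <;>
    simp only [val11, ZMod.val_zero, ZMod.val_one, add_zero, zero_add] <;> norm_num

/-- Reflect the sign of the coordinates where `a` is `1`, then translate by `γ`. -/
noncomputable def flipT {n : ℕ} (a : Fin n → ZMod 2) (γ : EuclideanSpace ℝ (Fin n)) :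
    EuclideanSpace ℝ (Fin n) ≃ᵢ EuclideanSpace ℝ (Fin n) :=
  (LinearIsometryEquiv.piLpCongrRight 2
    (fun j => if a j = 1 then LinearIsometryEquiv.neg ℝ else
      LinearIsometryEquiv.refl ℝ ℝ)).toIsometryEquiv.trans (IsometryEquiv.addLeft γ)

lemma flipT_apply {n : ℕ} (a : Fin n → ZMod 2) (γ v : EuclideanSpace ℝ (Fin n)) (j : Fin n) :
    flipT a γ v j = γ j + (if a j = 1 then (-1:ℝ) else 1) * v j := by
  simp only [flipT, IsometryEquiv.trans_apply, IsometryEquiv.addLeft_apply]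
  have : (LinearIsometryEquiv.piLpCongrRight 2
    (fun j => if a j = 1 then LinearIsometryEquiv.neg ℝ else
      LinearIsometryEquiv.refl ℝ ℝ)).toIsometryEquiv v j
      = (if a j = 1 then (-1:ℝ) else 1) * v j := by
    simp only [LinearIsometryEquiv.coe_toIsometryEquiv,
      LinearIsometryEquiv.piLpCongrRight_apply]
    split_ifs with h <;> simp [h]
  rw [PiLp.add_apply, this]

lemma pt_coord {n : ℕ} (L i : ℕ) (a b : Fin n → ZMod 2) (z : Fin n → ℤ) (j : Fin n) :
    ((2 : ℝ) ^ (i - 1) • psiR a + (2 : ℝ) ^ (L - 1) • psiR b + (2 : ℝ) ^ L • embZ z) j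
      = (2:ℝ) ^ (i-1) * ((a j).val : ℝ) + (2:ℝ) ^ (L-1) * ((b j).val : ℝ)
        + (2:ℝ) ^ L * ((z j : ℤ) : ℝ) := by
  simp [psiR, embZ, PiLp.add_apply, PiLp.smul_apply, smul_eq_mul]

lemma flipT_image {n L i : ℕ} (hL : 2 ≤ L)
    (Ci CL : Submodule (ZMod 2) (Fin n → ZMod 2))
    {a b : Fin n → ZMod 2} (ha : a ∈ Ci) (hb : b ∈ CL) (z : Fin n → ℤ) :
    flipT a ((2 : ℝ) ^ (i - 1) • psiR a + (2 : ℝ) ^ (L - 1) • psiR b + (2 : ℝ) ^ L • embZ z)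
      '' gammaTwoLevels L i Ci CL = gammaTwoLevels L i Ci CL := by
  set γ := (2 : ℝ) ^ (i - 1) • psiR a + (2 : ℝ) ^ (L - 1) • psiR b + (2 : ℝ) ^ L • embZ z
    with hγ
  have hpow : (2:ℝ) ^ L = 2 ^ (L - 1) * 2 := by
    rw [← pow_succ]; congr 1; omega
  apply Set.Subset.antisymm
  · rintro w ⟨v, ⟨a', ha', b', hb', z', rfl⟩, rfl⟩
    classical
    refine ⟨a + a', add_mem ha ha', b + b', add_mem hb hb',
      fun j => z j + (if a j = 1 then -1 else 1) * z' j
        + (lvlL (a j) (b j) (b' j)).choose, ?_⟩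
    ext j
    have e1 := lvlI (a j) (a' j)
    have e2 := (lvlL (a j) (b j) (b' j)).choose_spec
    rw [flipT_apply, hγ, pt_coord, pt_coord, pt_coord]
    have hz : (((z j + (if a j = 1 then -1 else 1) * z' j
        + (lvlL (a j) (b j) (b' j)).choose : ℤ)) : ℝ)
        = (z j : ℝ) + (if a j = 1 then (-1:ℝ) else 1) * (z' j : ℝ)
          + ((lvlL (a j) (b j) (b' j)).choose : ℝ) := by
      split_ifs <;> push_cast <;> ring
    rw [show ((a + a') j) = a j + a' j from rfl, show ((b + b') j) = b j + b' j from rfl,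
      hz, hpow]
    linear_combination (2:ℝ) ^ (i-1) * e1 + (2:ℝ) ^ (L-1) * e2
  · rintro w ⟨a', ha', b', hb', z', rfl⟩
    classical
    set w : EuclideanSpace ℝ (Fin n) :=
      (2 : ℝ) ^ (i - 1) • psiR a' + (2 : ℝ) ^ (L - 1) • psiR b' + (2 : ℝ) ^ L • embZ z'
      with hw
    set v : EuclideanSpace ℝ (Fin n) :=
      WithLp.toLp 2 (fun j => (if a j = 1 then (-1:ℝ) else 1) * (w j - γ j)) with hv
    have hTv : flipT a γ v = w := by
      ext j
      rw [flipT_apply]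
      show γ j + (if a j = 1 then (-1:ℝ) else 1)
        * ((if a j = 1 then (-1:ℝ) else 1) * (w j - γ j)) = w j
      split_ifs <;> ring
    refine ⟨v, ?_, hTv⟩
    refine ⟨a + a', add_mem ha ha', b + b', add_mem hb hb',
      fun j => (if a j = 1 then -1 else 1) * (z' j - z j)
        + (lvlL' (a j) (b j) (b' j)).choose, ?_⟩
    ext j
    have e1 := lvlI' (a j) (a' j)
    have e2 := (lvlL' (a j) (b j) (b' j)).choose_spec
    have hz : ((((if a j = 1 then -1 else 1) * (z' j - z j)
        + (lvlL' (a j) (b j) (b' j)).choose : ℤ)) : ℝ)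
        = (if a j = 1 then (-1:ℝ) else 1) * ((z' j : ℝ) - (z j : ℝ))
          + ((lvlL' (a j) (b j) (b' j)).choose : ℝ) := by
      split_ifs <;> push_cast <;> ring
    show (if a j = 1 then (-1:ℝ) else 1) * (w j - γ j) = _
    rw [hw, hγ, pt_coord, pt_coord, pt_coord,
      show ((a + a') j) = a j + a' j from rfl, show ((b + b') j) = b j + b' j from rfl,
      hz, hpow]
    linear_combination (2:ℝ) ^ (i-1) * e1 + (2:ℝ) ^ (L-1) * e2

lemma flipT_zero {n L i : ℕ} (a b : Fin n → ZMod 2) (z : Fin n → ℤ) :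
    flipT a ((2 : ℝ) ^ (i - 1) • psiR a + (2 : ℝ) ^ (L - 1) • psiR b + (2 : ℝ) ^ L • embZ z) 0
      = (2 : ℝ) ^ (i - 1) • psiR a + (2 : ℝ) ^ (L - 1) • psiR b + (2 : ℝ) ^ L • embZ z := by
  ext j
  rw [flipT_apply]
  show _ + _ * (0:ℝ) = _
  ring

/-- An `L`-level Construction C with only two nonzero linear component codes `C_i` and
`C_L` (`1 ≤ i ≤ L-1`), i.e. `Γ_C = 2^{i-1}ψ(C_i) + 2^{L-1}ψ(C_L) + 2^L ℤ^n`,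
is geometrically uniform. -/
theorem constructionC_two_nonzero_levels_geometricallyUniform {n L i : ℕ}
    (hi : 1 ≤ i) (hiL : i ≤ L - 1) (hL : 2 ≤ L)
    (Ci CL : Submodule (ZMod 2) (Fin n → ZMod 2)) :
    ∀ x ∈ gammaTwoLevels L i Ci CL, ∀ y ∈ gammaTwoLevels L i Ci CL,
      ∃ T : EuclideanSpace ℝ (Fin n) ≃ᵢ EuclideanSpace ℝ (Fin n),
        T x = y ∧ T '' gammaTwoLevels L i Ci CL = gammaTwoLevels L i Ci CL := by
  rintro x ⟨ax, hax, bx, hbx, zx, rfl⟩ y ⟨ay, hay, by', hby, zy, rfl⟩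
  set X := (2 : ℝ) ^ (i - 1) • psiR ax + (2 : ℝ) ^ (L - 1) • psiR bx + (2 : ℝ) ^ L • embZ zx
  set Y := (2 : ℝ) ^ (i - 1) • psiR ay + (2 : ℝ) ^ (L - 1) • psiR by' + (2 : ℝ) ^ L • embZ zy
  refine ⟨(flipT ax X).symm.trans (flipT ay Y), ?_, ?_⟩
  · have h0 : flipT ax X 0 = X := flipT_zero ax bx zx
    have : (flipT ax X).symm X = 0 := (flipT ax X).symm_apply_eq.mpr h0.symm
    simp [IsometryEquiv.trans_apply, this, flipT_zero ay by' zy]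
    exact flipT_zero ay by' zy
  · have hx : flipT ax X '' gammaTwoLevels L i Ci CL = gammaTwoLevels L i Ci CL :=
      flipT_image hL Ci CL hax hbx zx
    have hy : flipT ay Y '' gammaTwoLevels L i Ci CL = gammaTwoLevels L i Ci CL :=
      flipT_image hL Ci CL hay hby zy
    have hxs : (flipT ax X).symm '' gammaTwoLevels L i Ci CL = gammaTwoLevels L i Ci CL := by
      conv_lhs => rw [← hx]
      rw [← Set.image_comp]
      simp [Set.image_id']
    rw [show ⇑((flipT ax X).symm.trans (flipT ay Y))
        = ⇑(flipT ay Y) ∘ ⇑(flipT ax X).symm from rfl,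
      Set.image_comp, hxs, hy]
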